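/- Let K be a number field of degree n and let β be a nonzero algebraic integer of K. If Log(β) ∈ Q_k for some index k > r₁ (so that φ_k is a complex embedding) and φ_k(β) ∉ ℝ, then K = ℚ(β) and φ_k(β) is a complex Pisot number. -/

import Mathlib

open Polynomial NumberField

noncomputable section

/-- A Pisot number: a real algebraic integer `θ > 1` all of whose other conjugates over `ℚ`
have modulus strictly smaller than `1`. -/
def IsPisotNumber (θ : ℝ) : Prop :=
  1 < θ ∧ IsIntegral ℤ θ ∧
    ∀ z : ℂ, aeval z (minpoly ℚ θ) = 0 → z ≠ (θ : ℂ) → ‖z‖ < 1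

/-- A Salem number: a real algebraic integer `θ > 1` all of whose other conjugates over `ℚ`
have modulus at most `1`, with at least one conjugate of modulus exactly `1`. -/
def IsSalemNumber (θ : ℝ) : Prop :=
  1 < θ ∧ IsIntegral ℤ θ ∧
    (∀ z : ℂ, aeval z (minpoly ℚ θ) = 0 → z ≠ (θ : ℂ) → ‖z‖ ≤ 1) ∧
    (∃ z : ℂ, aeval z (minpoly ℚ θ) = 0 ∧ ‖z‖ = 1)

/-- A complex Pisot number: a non-real algebraic integer `θ` with `|θ| > 1` all of whose
conjugates over `ℚ` other than `θ` and `conj θ` have modulus strictly smaller than `1`. -/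
def IsComplexPisotNumber (θ : ℂ) : Prop :=
  θ.im ≠ 0 ∧ 1 < ‖θ‖ ∧ IsIntegral ℤ θ ∧
    ∀ z : ℂ, aeval z (minpoly ℚ θ) = 0 → z ≠ θ → z ≠ (starRingEnd ℂ) θ → ‖z‖ < 1

variable {K : Type*} [Field K]

/-- The `Log` map `x ↦ (log|σ₁ x|, …, log|σ_{r₁} x|, 2 log|τ₁ x|, …, 2 log|τ_{r₂} x|)`,
indexed by `Fin r₁ ⊕ Fin r₂` (real embeddings first, then representatives of the complex
conjugate pairs). -/
def LogMap {r₁ r₂ : ℕ} (σ : Fin r₁ → (K →+* ℂ)) (τ : Fin r₂ → (K →+* ℂ)) (x : K) :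
    Fin r₁ ⊕ Fin r₂ → ℝ :=
  Sum.elim (fun i => Real.log (‖σ i x‖))
    (fun i => 2 * Real.log (‖τ i x‖))

/-- `σ` is the family of the real embeddings of `K` and `τ` a system of representatives of the
conjugate pairs of non-real embeddings: each `σ i` is real-valued, each `τ i` is not, and
`σ, τ, conj ∘ τ` together enumerate all embeddings `K →+* ℂ` without repetition. -/
def IsEmbeddingSystem {r₁ r₂ : ℕ} (σ : Fin r₁ → (K →+* ℂ)) (τ : Fin r₂ → (K →+* ℂ)) : Prop :=
  (∀ i, ∀ x : K, ((σ i) x).im = 0) ∧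
  (∀ i, ∃ x : K, ((τ i) x).im ≠ 0) ∧
  Function.Bijective
    (Sum.elim σ (Sum.elim τ (fun i => (starRingEnd ℂ).comp (τ i))) :
      Fin r₁ ⊕ (Fin r₂ ⊕ Fin r₂) → (K →+* ℂ))

/-- The open region `Q_k = {v : v_k > 0 and v_j < 0 for all j ≠ k}`. -/
def PosQuadrant {ι : Type*} (k : ι) : Set (ι → ℝ) :=
  {v | 0 < v k ∧ ∀ j, j ≠ k → v j < 0}

/-- The half line `l_{k,j} = {v : v_k > 0, v_j = -v_k, v_i = 0 for i ≠ k, j}`. -/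
def SalemLine {ι : Type*} (k j : ι) : Set (ι → ℝ) :=
  {v | 0 < v k ∧ v j = -v k ∧ ∀ i, i ≠ k → i ≠ j → v i = 0}

/-- Proposition, part 3. If `β` is a nonzero algebraic integer of a number
field `K` of degree `n = r₁ + 2r₂`, `Log β ∈ Q_k` for an index `k` corresponding to a complex
embedding `φ_k = τ i`, and `φ_k(β) ∉ ℝ`, then `K = ℚ(β)` and `φ_k(β)` is a complex Pisot
number. -/
theorem complexPisot_of_logMap_mem_posQuadrant_complex
    {K : Type*} [Field K] [NumberField K] {r₁ r₂ : ℕ}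
    (σ : Fin r₁ → (K →+* ℂ)) (τ : Fin r₂ → (K →+* ℂ))
    (hsys : IsEmbeddingSystem σ τ)
    (hdeg : Module.finrank ℚ K = r₁ + 2 * r₂)
    (β : K) (hβ : β ≠ 0) (hint : IsIntegral ℤ β)
    (i : Fin r₂)
    (hQ : LogMap σ τ β ∈ PosQuadrant (Sum.inr i : Fin r₁ ⊕ Fin r₂))
    (hnotreal : ((τ i) β).im ≠ 0) :
    IntermediateField.adjoin ℚ {β} = ⊤ ∧ IsComplexPisotNumber ((τ i) β) := by
  obtain ⟨hσreal, hτnr, henum⟩ := hsys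
  set θ := (τ i) β with hθdef
  -- absolute value facts
  have habsσ : ∀ j, ‖σ j β‖ < 1 := by
    intro j
    have h0 : 0 < ‖σ j β‖ := by simpa using hβ
    have := hQ.2 (Sum.inl j) (by simp)
    simpa [LogMap, Real.log_neg_iff h0] using this
  have habsτ : ∀ j, j ≠ i → ‖τ j β‖ < 1 := by
    intro j hj
    have h0 : 0 < ‖τ j β‖ := by simpa using hβ
    have := hQ.2 (Sum.inr j) (by simp [hj])
    have h2 : Real.log (‖τ j β‖) < 0 := by
      have : 2 * Real.log (‖τ j β‖) < 0 := by simpa [LogMap] using this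
      linarith
    exact (Real.log_neg_iff h0).mp h2
  have hθgt : 1 < ‖θ‖ := by
    have h0 : 0 < ‖θ‖ := by simpa [hθdef] using hβ
    have := hQ.1
    have h2 : 0 < Real.log (‖θ‖) := by
      have : 0 < 2 * Real.log (‖τ i β‖) := by simpa [LogMap] using this
      linarith
    exact (Real.log_pos_iff h0.le).mp h2
  have hconjθ : (starRingEnd ℂ) θ ≠ θ := fun h => hnotreal (Complex.conj_eq_iff_im.mp h)
  -- classification of embeddings with large value at β
  have key : ∀ g : K →+* ℂ, 1 ≤ ‖g β‖ →
      g = τ i ∨ g = (starRingEnd ℂ).comp (τ i) := by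
    intro g hg
    obtain ⟨w, hw⟩ := henum.2 g
    rcases w with j | j | j
    · exfalso; rw [← hw] at hg; simp only [Sum.elim_inl] at hg
      exact absurd (habsσ j) (not_lt.mpr hg)
    · rcases eq_or_ne j i with rfl | hj
      · left; rw [← hw]; rfl
      · exfalso; rw [← hw] at hg; simp only [Sum.elim_inr, Sum.elim_inl] at hg
        exact absurd (habsτ j hj) (not_lt.mpr hg)
    · rcases eq_or_ne j i with rfl | hj
      · right; rw [← hw]; rfl
      · exfalso; rw [← hw] at hg
        simp only [Sum.elim_inr, RingHom.coe_comp, Function.comp_apply] at hg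
        rw [Complex.norm_conj] at hg
        exact absurd (habsτ j hj) (not_lt.mpr hg)
  have hβQ : IsIntegral ℚ β := hint.tower_top
  -- K = ℚ(β)
  have htop : IntermediateField.adjoin ℚ {β} = ⊤ := by
    set F := IntermediateField.adjoin ℚ {β} with hF
    have hβF : β ∈ F := IntermediateField.mem_adjoin_simple_self ℚ β
    letI : Algebra F ℂ := ((τ i).comp (algebraMap F K)).toAlgebra
    have hcomm : ∀ x : F, algebraMap F ℂ x = (τ i) (algebraMap F K x) := fun x => rfl
    have hval : ∀ g : K →ₐ[F] ℂ, g β = θ := by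
      intro g
      have h1 : g (algebraMap F K ⟨β, hβF⟩) = θ := by
        rw [g.commutes]; exact (hcomm _)
      simpa using h1
    have hsub : ∀ g g' : K →ₐ[F] ℂ, g = g' := by
      intro g g'
      have hth : ∀ h : K →ₐ[F] ℂ, (h : K →+* ℂ) = τ i := by
        intro h
        have h1 : 1 ≤ ‖(h : K →+* ℂ) β‖ := by
          rw [show (h : K →+* ℂ) β = θ from hval h]; exact le_of_lt hθgt
        rcases key _ h1 with h2 | h2
        · exact h2
        · exfalso
          have h3 : (h : K →+* ℂ) β = (starRingEnd ℂ) θ := by rw [h2]; rfl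
          exact hconjθ (((hval h).symm.trans h3).symm)
      exact AlgHom.coe_ringHom_injective ((hth g).trans (hth g').symm)
    have hne : Nonempty (K →ₐ[F] ℂ) :=
      ⟨{ toRingHom := τ i, commutes' := fun x => rfl }⟩
    haveI : FiniteDimensional F K := FiniteDimensional.right ℚ F K
    have hcard : Fintype.card (K →ₐ[F] ℂ) = Module.finrank F K := AlgHom.card F K ℂ
    have hone : Module.finrank F K = 1 := by
      rw [← hcard]
      obtain ⟨g⟩ := hne
      exact Fintype.card_eq_one_iff.mpr ⟨g, fun g' => hsub g' g⟩
    have : Module.finrank F K = Module.finrank (⊤ : IntermediateField ℚ K) K := by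
      rw [hone, IntermediateField.finrank_top]
    exact IntermediateField.eq_of_le_of_finrank_eq' le_top this
  refine ⟨htop, hnotreal, hθgt, hint.map (τ i).toIntAlgHom, ?_⟩
  -- conjugates
  intro z hz hzθ hzconj
  have hmin : minpoly ℚ θ = minpoly ℚ β := minpoly.algHom_eq (τ i).toRatAlgHom (τ i).injective β
  rw [hmin] at hz
  have hzroot : z ∈ (minpoly ℚ β).aroots ℂ :=
    (Polynomial.mem_aroots).mpr ⟨minpoly.ne_zero hβQ, hz⟩
  let g₁ : IntermediateField.adjoin ℚ {β} →ₐ[ℚ] ℂ :=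
    (IntermediateField.algHomAdjoinIntegralEquiv ℚ hβQ).symm ⟨z, hzroot⟩
  have hg₁ : g₁ (IntermediateField.AdjoinSimple.gen ℚ β) = z :=
    IntermediateField.algHomAdjoinIntegralEquiv_symm_apply_gen ℚ hβQ ⟨z, hzroot⟩
  let e : K ≃ₐ[ℚ] ↥(IntermediateField.adjoin ℚ {β}) :=
    ((IntermediateField.equivOfEq htop).trans IntermediateField.topEquiv).symm
  have heβ : e β = IntermediateField.AdjoinSimple.gen ℚ β := by
    apply_fun ((IntermediateField.equivOfEq htop).trans IntermediateField.topEquiv)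
    simp [e]
    exact ((IntermediateField.equivOfEq htop).trans IntermediateField.topEquiv).apply_symm_apply β
  let g : K →+* ℂ := (g₁.comp e.toAlgHom : K →ₐ[ℚ] ℂ)
  have hgβ : g β = z := by
    show g₁ (e β) = z
    rw [heβ, hg₁]
  obtain ⟨w, hw⟩ := henum.2 g
  rcases w with j | j | j
  · have : z = σ j β := by rw [← hgβ, ← hw]; rfl
    rw [this]; exact habsσ j
  · rcases eq_or_ne j i with rfl | hj
    · exfalso; apply hzθ; rw [← hgβ, ← hw]; rfl
    · have : z = τ j β := by rw [← hgβ, ← hw]; rfl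
      rw [this]; exact habsτ j hj
  · rcases eq_or_ne j i with rfl | hj
    · exfalso; apply hzconj; rw [← hgβ, ← hw]; rfl
    · have : z = (starRingEnd ℂ) (τ j β) := by rw [← hgβ, ← hw]; rfl
      rw [this, Complex.norm_conj]; exact habsτ j hj
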